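/- Let S₁, S₂, S₃, S₄ be supplementary difference sets in Z/vZ with parameters 4-{v; k₁,k₂,k₃,k₄; λ} satisfying k₁+k₂+k₃+k₄ = v + λ. Define circulant ±1 matrices Aₗ by (Aₗ)_{ij} = −1 if i−j ∈ Sₗ and +1 otherwise. Then A₁ A₁ᵀ + A₂ A₂ᵀ + A₃ A₃ᵀ + A₄ A₄ᵀ = 4vI, and hence plugging A₁,…,A₄ into the Goethals–Seidel array yields a Hadamard matrix of order 4v. -/
import Mathlib

/-- The 4×4 block matrix built from the 4×4 array of blocks `M`. -/
def blockMat4 {m : Type*} (M : Fin 4 → Fin 4 → Matrix m m ℝ) :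
    Matrix (Fin 4 × m) (Fin 4 × m) ℝ :=
  Matrix.of fun p q => M p.1 q.1 p.2 q.2

/-- The anti-diagonal permutation (reversal) matrix on `ZMod n`. -/
def revMat (n : ℕ) : Matrix (ZMod n) (ZMod n) ℝ :=
  Matrix.of fun i j => if i + j + 1 = 0 then 1 else 0

/-- The Goethals–Seidel array of four matrices. -/
def GSarray {n : ℕ} [NeZero n] (A B C D : Matrix (ZMod n) (ZMod n) ℝ) :
    Matrix (Fin 4 × ZMod n) (Fin 4 × ZMod n) ℝ :=
  blockMat4
    ![![A, B * revMat n, C * revMat n, D * revMat n],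
      ![-(B * revMat n), A, D.transpose * revMat n, -(C.transpose * revMat n)],
      ![-(C * revMat n), -(D.transpose * revMat n), A, B.transpose * revMat n],
      ![-(D * revMat n), C.transpose * revMat n, -(B.transpose * revMat n), A]]

/-- The circulant ±1 matrix associated with a subset `S` of `ZMod v`:
entry `(i,j)` is `-1` if `i - j ∈ S` and `+1` otherwise. -/
def sdsMat (v : ℕ) [NeZero v] (S : Finset (ZMod v)) : Matrix (ZMod v) (ZMod v) ℝ :=
  Matrix.of fun i j => if i - j ∈ S then -1 else 1

open Matrix
set_option linter.unusedSectionVars false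

section Aux

variable {v : ℕ} [NeZero v]

lemma mul_revMat_apply (M : Matrix (ZMod v) (ZMod v) ℝ) (i j : ZMod v) :
    (M * revMat v) i j = M i (-j - 1) := by
  simp only [Matrix.mul_apply, revMat, Matrix.of_apply, mul_ite, mul_one, mul_zero]
  have h : ∀ k : ZMod v, (k + j + 1 = 0) ↔ k = -j - 1 :=
    fun k => ⟨fun h => by linear_combination h, fun h => by rw [h]; ring⟩
  simp only [h]; simp

lemma revMat_mul_apply (M : Matrix (ZMod v) (ZMod v) ℝ) (i j : ZMod v) :
    (revMat v * M) i j = M (-i - 1) j := by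
  simp only [Matrix.mul_apply, revMat, Matrix.of_apply, ite_mul, one_mul, zero_mul]
  have h : ∀ k : ZMod v, (i + k + 1 = 0) ↔ k = -i - 1 :=
    fun k => ⟨fun h => by linear_combination h, fun h => by rw [h]; ring⟩
  simp only [h]; simp

omit [NeZero v] in
lemma revMat_transpose : (revMat v)ᵀ = revMat v := by
  ext i j; simp only [revMat, Matrix.transpose_apply, Matrix.of_apply]; rw [add_comm j i]

lemma revMat_mul_self : revMat v * revMat v = 1 := by
  ext i j; rw [mul_revMat_apply]
  simp only [revMat, Matrix.of_apply, Matrix.one_apply]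
  have h : i + (-j - 1) + 1 = i - j := by ring
  rw [h]; simp [sub_eq_zero]

lemma crev (f : ZMod v → ℝ) :
    revMat v * circulant f = circulant (fun s => f (-s)) * revMat v := by
  ext i j; rw [mul_revMat_apply, revMat_mul_apply]
  simp only [circulant_apply]; congr 1; ring

lemma blockMat4_transpose {m : Type*} (M : Fin 4 → Fin 4 → Matrix m m ℝ) :
    (blockMat4 M)ᵀ = blockMat4 fun i j => (M j i)ᵀ := rfl

lemma blockMat4_mul {m : Type*} [Fintype m] (M N : Fin 4 → Fin 4 → Matrix m m ℝ) :
    blockMat4 M * blockMat4 N =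
      blockMat4 fun i j => M i 0 * N 0 j + M i 1 * N 1 j + M i 2 * N 2 j + M i 3 * N 3 j := by
  ext ⟨p, i⟩ ⟨q, j⟩
  simp [blockMat4, Matrix.mul_apply, Fintype.sum_prod_type, Fin.sum_univ_four,
    Finset.sum_add_distrib]

lemma smul_one_blockMat4 {m : Type*} [DecidableEq m] (c : ℝ) :
    (c • 1 : Matrix (Fin 4 × m) (Fin 4 × m) ℝ) =
      blockMat4 fun i j => if i = j then c • 1 else 0 := by
  ext ⟨p, i⟩ ⟨q, j⟩
  by_cases hp : p = q
  · subst hp; by_cases hi : i = j <;> simp [blockMat4, Matrix.one_apply, Prod.ext_iff, hi]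
  · simp [blockMat4, Matrix.one_apply, Prod.ext_iff, hp]


lemma count_shift (S : Finset (ZMod v)) (x : ZMod v) :
    (Finset.univ.filter fun k => x - k ∈ S).card = S.card := by
  apply Finset.card_bij (fun k _ => x - k)
  · intro k hk; simpa using (Finset.mem_filter.1 hk).2
  · intro k₁ h₁ k₂ h₂ h
    linear_combination -h
  · intro s hs
    refine ⟨x - s, Finset.mem_filter.2 ⟨Finset.mem_univ _, ?_⟩, by ring⟩
    have : x - (x - s) = s := by ring
    rw [this]; exact hs

lemma count_pairs (S : Finset (ZMod v)) (i j : ZMod v) :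
    (Finset.univ.filter fun k => i - k ∈ S ∧ j - k ∈ S).card
      = ((S ×ˢ S).filter fun p => p.1 - p.2 = i - j).card := by
  apply Finset.card_bij (fun k _ => (i - k, j - k))
  · intro k hk
    have h := (Finset.mem_filter.1 hk).2
    simp only [Finset.mem_filter, Finset.mem_product]
    exact ⟨⟨h.1, h.2⟩, by ring⟩
  · intro k₁ h₁ k₂ h₂ h
    have h1 : i - k₁ = i - k₂ := congrArg Prod.fst h
    linear_combination -h1
  · intro p hp
    simp only [Finset.mem_filter, Finset.mem_product] at hp
    have e1 : i - (i - p.1) = p.1 := by ring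
    have e2 : j - (i - p.1) = p.2 := by linear_combination hp.2
    refine ⟨i - p.1, Finset.mem_filter.2 ⟨Finset.mem_univ _, ?_⟩, ?_⟩
    · rw [e1, e2]; exact hp.1
    · rw [e1, e2]

lemma count_diag (S : Finset (ZMod v)) :
    ((S ×ˢ S).filter fun p => p.1 - p.2 = (0 : ZMod v)).card = S.card := by
  symm
  apply Finset.card_bij (fun s _ => (s, s))
  · intro s hs
    simp only [Finset.mem_filter, Finset.mem_product]
    exact ⟨⟨hs, hs⟩, by ring⟩
  · intro s₁ h₁ s₂ h₂ h
    exact congrArg Prod.fst h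
  · intro p hp
    simp only [Finset.mem_filter, Finset.mem_product] at hp
    have : p.1 = p.2 := by linear_combination hp.2
    exact ⟨p.1, hp.1.1, by rw [Prod.mk.injEq]; exact ⟨rfl, this⟩⟩

lemma sds_entry_formula (S : Finset (ZMod v)) (i j : ZMod v) :
    (sdsMat v S * (sdsMat v S)ᵀ) i j
      = (v : ℝ) - 4 * S.card + 4 * ((S ×ˢ S).filter fun p => p.1 - p.2 = i - j).card := by
  rw [Matrix.mul_apply]
  have key : ∀ k : ZMod v, sdsMat v S i k * (sdsMat v S)ᵀ k j
      = 1 - 2 * (if i - k ∈ S then (1:ℝ) else 0) - 2 * (if j - k ∈ S then (1:ℝ) else 0)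
        + 4 * (if i - k ∈ S ∧ j - k ∈ S then (1:ℝ) else 0) := by
    intro k
    simp only [sdsMat, Matrix.transpose_apply, Matrix.of_apply]
    by_cases h1 : i - k ∈ S <;> by_cases h2 : j - k ∈ S <;> simp [h1, h2] <;> norm_num
  rw [Finset.sum_congr rfl fun k _ => key k]
  rw [Finset.sum_add_distrib, Finset.sum_sub_distrib, Finset.sum_sub_distrib,
    ← Finset.mul_sum, ← Finset.mul_sum, ← Finset.mul_sum]
  rw [Finset.sum_boole, Finset.sum_boole, Finset.sum_boole]
  rw [count_shift S i, count_shift S j, count_pairs S i j]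
  simp [Finset.card_univ, ZMod.card]
  ring

lemma fin4_cases : ∀ p : Fin 4, p = 0 ∨ p = 1 ∨ p = 2 ∨ p = 3 := by decide

lemma gs_key (a b c d : ZMod v → ℝ) (r : ℝ)
    (hsum : circulant a * (circulant a)ᵀ + circulant b * (circulant b)ᵀ +
      circulant c * (circulant c)ᵀ + circulant d * (circulant d)ᵀ = r • 1) :
    GSarray (circulant a) (circulant b) (circulant c) (circulant d) *
      (GSarray (circulant a) (circulant b) (circulant c) (circulant d))ᵀ = r • 1 := by
  simp only [Matrix.transpose_circulant] at hsum
  have ccomm : ∀ f g : ZMod v → ℝ, circulant f * circulant g = circulant g * circulant f :=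
    fun f g => Matrix.circulant_mul_comm f g
  have hRR : ∀ M : Matrix (ZMod v) (ZMod v) ℝ, revMat v * (revMat v * M) = M :=
    fun M => by rw [← Matrix.mul_assoc, revMat_mul_self, Matrix.one_mul]
  have h2 : ∀ x : ZMod v → ℝ,
      revMat v * circulant (fun i => x (-i)) = circulant x * revMat v := by
    intro x
    have hxx : (fun s => x (- -s)) = x := funext fun s => by rw [neg_neg]
    rw [crev, hxx]
  have h3 : ∀ (x : ZMod v → ℝ) (M : Matrix (ZMod v) (ZMod v) ℝ),
      revMat v * (circulant x * M) = circulant (fun i => x (-i)) * (revMat v * M) :=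
    fun x M => by rw [← Matrix.mul_assoc, crev, Matrix.mul_assoc]
  have h4 : ∀ (x : ZMod v → ℝ) (M : Matrix (ZMod v) (ZMod v) ℝ),
      revMat v * (circulant (fun i => x (-i)) * M) = circulant x * (revMat v * M) :=
    fun x M => by rw [← Matrix.mul_assoc, h2, Matrix.mul_assoc]
  have hE : ∀ x : ZMod v → ℝ, circulant (fun i => x i) = circulant x := fun x => rfl
  have ccomm3 : ∀ f g : ZMod v → ℝ,
      circulant f * (circulant g * revMat v) = circulant g * (circulant f * revMat v) :=
    fun f g => by rw [← Matrix.mul_assoc, ccomm, Matrix.mul_assoc]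
  rw [GSarray, blockMat4_transpose, blockMat4_mul, smul_one_blockMat4]
  apply congrArg blockMat4
  funext p q
  rcases fin4_cases p with rfl | rfl | rfl | rfl <;> rcases fin4_cases q with rfl | rfl | rfl | rfl <;>
    simp only [Matrix.cons_val_zero, Matrix.cons_val_one, Matrix.head_cons,
      Matrix.cons_val_two, Matrix.tail_cons, Matrix.cons_val_three] <;>
    simp only [Matrix.transpose_mul, Matrix.transpose_neg, revMat_transpose,
      Matrix.transpose_circulant, Matrix.neg_mul, Matrix.mul_neg, neg_neg,
      Matrix.mul_assoc, h4, h3, h2, crev, hE, hRR, revMat_mul_self, Matrix.mul_one] <;>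
    simp only [show ((0:Fin 4) = 1) = False by simp, show ((0:Fin 4) = 2) = False by simp,
      show ((0:Fin 4) = 3) = False by simp, show ((1:Fin 4) = 0) = False by simp,
      show ((1:Fin 4) = 2) = False by simp, show ((1:Fin 4) = 3) = False by simp,
      show ((2:Fin 4) = 0) = False by simp, show ((2:Fin 4) = 1) = False by simp,
      show ((2:Fin 4) = 3) = False by simp, show ((3:Fin 4) = 0) = False by simp,
      show ((3:Fin 4) = 1) = False by simp, show ((3:Fin 4) = 2) = False by simp,
      if_false, if_true, eq_self_iff_true]
  · -- (0,0)
    rw [← hsum]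
  · rw [ccomm3 a b, ccomm c d]; abel
  · rw [ccomm3 a c, ccomm b d]; abel
  · rw [ccomm3 a d, ccomm b c]; abel
  · rw [ccomm3 b a, ccomm (fun i => d (-i)) (fun s => c (-s))]; abel
  · -- (1,1)
    rw [ccomm (fun i => d (-i)) d, ccomm (fun i => c (-i)) c, ← hsum]; abel
  · rw [ccomm b (fun s => c (-s)), ccomm3 a (fun s => d (-s))]; abel
  · rw [ccomm b (fun s => d (-s)), ccomm3 a (fun s => c (-s))]; abel
  · rw [ccomm3 c a, ccomm (fun i => d (-i)) (fun s => b (-s))]; abel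
  · rw [ccomm c (fun s => b (-s)), ccomm3 (fun i => d (-i)) a]; abel
  · -- (2,2)
    rw [ccomm (fun i => d (-i)) d, ccomm (fun i => b (-i)) b, ← hsum]; abel
  · rw [ccomm c (fun s => d (-s)), ccomm3 a (fun s => b (-s))]; abel
  · rw [ccomm3 d a, ccomm (fun i => c (-i)) (fun s => b (-s))]; abel
  · rw [ccomm d (fun s => b (-s)), ccomm3 (fun i => c (-i)) a]; abel
  · rw [ccomm d (fun s => c (-s)), ccomm3 (fun i => b (-i)) a]; abel
  · -- (3,3)
    rw [ccomm (fun i => c (-i)) c, ccomm (fun i => b (-i)) b, ← hsum]; abel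

end Aux

theorem hadamard_from_sds (v : ℕ) [NeZero v] (k₁ k₂ k₃ k₄ l : ℕ)
    (S₁ S₂ S₃ S₄ : Finset (ZMod v))
    (hc₁ : S₁.card = k₁) (hc₂ : S₂.card = k₂) (hc₃ : S₃.card = k₃) (hc₄ : S₄.card = k₄)
    (hsds : ∀ g : ZMod v, g ≠ 0 →
      ((S₁ ×ˢ S₁).filter (fun p => p.1 - p.2 = g)).card +
      ((S₂ ×ˢ S₂).filter (fun p => p.1 - p.2 = g)).card +
      ((S₃ ×ˢ S₃).filter (fun p => p.1 - p.2 = g)).card +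
      ((S₄ ×ˢ S₄).filter (fun p => p.1 - p.2 = g)).card = l)
    (hk : k₁ + k₂ + k₃ + k₄ = v + l) :
    sdsMat v S₁ * (sdsMat v S₁).transpose + sdsMat v S₂ * (sdsMat v S₂).transpose +
      sdsMat v S₃ * (sdsMat v S₃).transpose + sdsMat v S₄ * (sdsMat v S₄).transpose =
      ((4 * v : ℕ) : ℝ) • (1 : Matrix (ZMod v) (ZMod v) ℝ) ∧
    (∀ p q, GSarray (sdsMat v S₁) (sdsMat v S₂) (sdsMat v S₃) (sdsMat v S₄) p q = 1 ∨
        GSarray (sdsMat v S₁) (sdsMat v S₂) (sdsMat v S₃) (sdsMat v S₄) p q = -1) ∧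
    GSarray (sdsMat v S₁) (sdsMat v S₂) (sdsMat v S₃) (sdsMat v S₄) *
      (GSarray (sdsMat v S₁) (sdsMat v S₂) (sdsMat v S₃) (sdsMat v S₄)).transpose =
      ((4 * v : ℕ) : ℝ) • (1 : Matrix (Fin 4 × ZMod v) (Fin 4 × ZMod v) ℝ) := by
  have main1 : sdsMat v S₁ * (sdsMat v S₁)ᵀ + sdsMat v S₂ * (sdsMat v S₂)ᵀ +
      sdsMat v S₃ * (sdsMat v S₃)ᵀ + sdsMat v S₄ * (sdsMat v S₄)ᵀ =
      ((4 * v : ℕ) : ℝ) • (1 : Matrix (ZMod v) (ZMod v) ℝ) := by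
    ext i j
    simp only [Matrix.add_apply]
    rw [sds_entry_formula, sds_entry_formula, sds_entry_formula, sds_entry_formula,
      hc₁, hc₂, hc₃, hc₄]
    by_cases h : i = j
    · subst h
      simp only [sub_self]
      rw [count_diag, count_diag, count_diag, count_diag, hc₁, hc₂, hc₃, hc₄]
      simp only [Matrix.smul_apply, Matrix.one_apply_eq, smul_eq_mul, mul_one]
      push_cast
      ring
    · have hg := hsds (i - j) (sub_ne_zero.2 h)
      have hgr := congrArg (Nat.cast : ℕ → ℝ) hg
      have hkr := congrArg (Nat.cast : ℕ → ℝ) hk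
      push_cast at hgr hkr
      rw [Matrix.smul_apply, Matrix.one_apply_ne h, smul_zero]
      linarith
  have pmA : ∀ (S : Finset (ZMod v)) (i j : ZMod v),
      sdsMat v S i j = 1 ∨ sdsMat v S i j = -1 := by
    intro S i j
    by_cases h : i - j ∈ S <;> simp [sdsMat, h]
  have pmneg : ∀ x : ℝ, (x = 1 ∨ x = -1) → (-x = 1 ∨ -x = -1) := by
    rintro x (h | h) <;> simp [h]
  refine ⟨main1, ?_, ?_⟩
  · intro p q
    obtain ⟨p1, i⟩ := p
    obtain ⟨q1, j⟩ := q
    rcases fin4_cases p1 with rfl | rfl | rfl | rfl <;>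
      rcases fin4_cases q1 with rfl | rfl | rfl | rfl <;>
      simp only [GSarray, blockMat4, Matrix.of_apply, Matrix.cons_val_zero, Matrix.cons_val_one,
        Matrix.head_cons, Matrix.cons_val_two, Matrix.tail_cons, Matrix.cons_val_three,
        Matrix.neg_apply, mul_revMat_apply, Matrix.transpose_apply] <;>
      first
        | exact pmA _ _ _
        | exact pmneg _ (pmA _ _ _)
  · have hA : sdsMat v S₁ = circulant (fun g => if g ∈ S₁ then (-1:ℝ) else 1) := rfl
    have hB : sdsMat v S₂ = circulant (fun g => if g ∈ S₂ then (-1:ℝ) else 1) := rfl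
    have hC : sdsMat v S₃ = circulant (fun g => if g ∈ S₃ then (-1:ℝ) else 1) := rfl
    have hD : sdsMat v S₄ = circulant (fun g => if g ∈ S₄ then (-1:ℝ) else 1) := rfl
    rw [hA, hB, hC, hD] at main1 ⊢
    exact gs_key _ _ _ _ _ main1
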